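/- In every non-classical point-symmetric state space, T_1 = T_2 = T_3: the no-free-information principle holds. -/

import Mathlib

/-- An effect on a state space `S`. -/
def IsEffect {V : Type*} [AddCommGroup V] [Module ℝ V]
    (S : Set V) (e : V →ₗ[ℝ] ℝ) : Prop :=
  ∀ s ∈ S, 0 ≤ e s ∧ e s ≤ 1

/-- A bundled observable on the state space `S` with unit effect `u`. -/
structure GObs {V : Type*} [AddCommGroup V] [Module ℝ V]
    (S : Set V) (u : V →ₗ[ℝ] ℝ) where
  n : ℕ
  eff : Fin n → (V →ₗ[ℝ] ℝ)
  effect : ∀ i, IsEffect S (eff i)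
  sum_eq : ∑ i, eff i = u

variable {V : Type*} [AddCommGroup V] [Module ℝ V] {S : Set V} {u : V →ₗ[ℝ] ℝ}

/-- `A` is a post-processing of `B` (`B → A`, i.e. `A ∈ simu(B)`). -/
def GObs.PostProc (B A : GObs S u) : Prop :=
  ∃ ν : Fin B.n → Fin A.n → ℝ,
    (∀ x y, 0 ≤ ν x y) ∧ (∀ x, ∑ y, ν x y = 1) ∧
    ∀ y, A.eff y = ∑ x, ν x y • B.eff x

/-- Post-processing equivalence of observables. -/
def GObs.PPEquiv (B B' : GObs S u) : Prop :=
  B.PostProc B' ∧ B'.PostProc B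

/-- `A` can be simulated from the set of observables `𝓑` by mixing post-processings. -/
def GObs.Simulable (𝓑 : Set (GObs S u)) (A : GObs S u) : Prop :=
  ∃ (m : ℕ) (p : Fin m → ℝ) (B : Fin m → GObs S u)
    (ν : (i : Fin m) → Fin (B i).n → Fin A.n → ℝ),
    (∀ i, 0 ≤ p i) ∧ ∑ i, p i = 1 ∧ (∀ i, B i ∈ 𝓑) ∧
    (∀ i x y, 0 ≤ ν i x y) ∧ (∀ i x, ∑ y, ν i x y = 1) ∧
    ∀ y, A.eff y = ∑ i, p i • ∑ x, ν i x y • (B i).eff x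

/-- `B` is simulation irreducible: whenever `B` can be simulated from a set `𝓑`,
some member of `𝓑` is post-processing equivalent to `B`. -/
def GObs.SimIrr (B : GObs S u) : Prop :=
  ∀ 𝓑 : Set (GObs S u), GObs.Simulable 𝓑 B → ∃ B' ∈ 𝓑, B.PPEquiv B'

/-- Two observables are compatible if both are post-processings of a common
(joint) observable. -/
def GObs.Compatible (A B : GObs S u) : Prop :=
  ∃ G : GObs S u, G.PostProc A ∧ G.PostProc B

/-- Membership in `T₃`: compatibility with every observable. -/
def GObs.InT3 (T : GObs S u) : Prop :=
  ∀ A : GObs S u, T.Compatible A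

/-- A trivial observable (`T₁`): all effects proportional to `u` via a probability
distribution. -/
def GObs.Trivial (T : GObs S u) : Prop :=
  ∃ p : Fin T.n → ℝ, (∀ x, 0 ≤ p x) ∧ ∑ x, p x = 1 ∧ ∀ x, T.eff x = p x • u

/-- The effect space of `S`. -/
def EffectSet (S : Set V) : Set (V →ₗ[ℝ] ℝ) :=
  {e | IsEffect S e}

section Aux
set_option linter.unusedSectionVars false
set_option linter.unusedVariables false

lemma nfi_postProc_trans {A B C : GObs S u}
    (h1 : B.PostProc C) (h2 : C.PostProc A) : B.PostProc A := by
  obtain ⟨ν1, hν1n, hν1s, hν1e⟩ := h1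
  obtain ⟨ν2, hν2n, hν2s, hν2e⟩ := h2
  refine ⟨fun x y => ∑ z, ν1 x z * ν2 z y, ?_, ?_, ?_⟩
  · intro x y
    exact Finset.sum_nonneg fun z _ => mul_nonneg (hν1n x z) (hν2n z y)
  · intro x
    rw [Finset.sum_comm]
    have h : ∀ z, ∑ y, ν1 x z * ν2 z y = ν1 x z := by
      intro z; rw [← Finset.mul_sum, hν2s, mul_one]
    simp_rw [h]; exact hν1s x
  · intro y
    rw [hν2e y]
    simp_rw [hν1e, Finset.smul_sum, smul_smul]
    rw [Finset.sum_comm]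
    refine Finset.sum_congr rfl fun x _ => ?_
    rw [Finset.sum_smul]
    refine Finset.sum_congr rfl fun z _ => ?_
    rw [mul_comm]

end Aux

section Aux2
set_option linter.unusedSectionVars false
set_option linter.unusedVariables false
variable {V : Type*} [NormedAddCommGroup V] [NormedSpace ℝ V] [FiniteDimensional ℝ V]
variable {S : Set V} {u : V →ₗ[ℝ] ℝ}

/-- If the effect set has an extreme point, every functional vanishing on S is zero. -/
lemma nfi_zero_of_vanish (hex : ∃ e, e ∈ Set.extremePoints ℝ (EffectSet S))
    (w : V →ₗ[ℝ] ℝ) (hw : ∀ s ∈ S, w s = 0) : w = 0 := by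
  obtain ⟨e, he⟩ := hex
  by_contra hw0
  have h1 : e - w ∈ EffectSet S := by
    intro s hs
    simp only [LinearMap.sub_apply, hw s hs, sub_zero]
    exact he.1 s hs
  have h2 : e + w ∈ EffectSet S := by
    intro s hs
    simp only [LinearMap.add_apply, hw s hs, add_zero]
    exact he.1 s hs
  have hseg : e ∈ openSegment ℝ (e - w) (e + w) := by
    refine ⟨1/2, 1/2, by norm_num, by norm_num, by norm_num, ?_⟩
    module
  have := he.2 h1 h2 hseg
  apply hw0
  have h3 : w = e - (e - w) := by abel
  rw [h3, this, sub_self]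

/-- A nontrivial extreme effect attains 0 and 1 on S, and value 1/2 at the symmetry point. -/
lemma nfi_ext_struct (hSne : S.Nonempty) (hScpt : IsCompact S)
    (hu : ∀ s ∈ S, u s = 1)
    (s₀ : V) (hs₀ : s₀ ∈ S) (hsym : ∀ s ∈ S, (2 : ℝ) • s₀ - s ∈ S)
    (hzero : ∀ w : V →ₗ[ℝ] ℝ, (∀ s ∈ S, w s = 0) → w = 0)
    (e : V →ₗ[ℝ] ℝ) (he : e ∈ Set.extremePoints ℝ (EffectSet S))
    (he0 : e ≠ 0) (heu : e ≠ u) :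
    ∃ t ∈ S, ∃ s ∈ S, e t = 1 ∧ e s = 0 ∧ e s₀ = 1/2 := by
  have hcont : Continuous e := e.continuous_of_finiteDimensional
  obtain ⟨t, htS, hmax⟩ := hScpt.exists_isMaxOn hSne hcont.continuousOn
  obtain ⟨s, hsS, hmin⟩ := hScpt.exists_isMinOn hSne hcont.continuousOn
  have hmax' : ∀ x ∈ S, e x ≤ e t := fun x hx => hmax hx
  have hmin' : ∀ x ∈ S, e s ≤ e x := fun x hx => hmin hx
  have hm0 : 0 < e t := by
    by_contra h
    push_neg at h
    apply he0
    apply hzero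
    intro x hx
    exact le_antisymm ((hmax' x hx).trans h) (he.1 x hx).1
  have hm1 : e t ≤ 1 := (he.1 t htS).2
  have hmeq : e t = 1 := by
    by_contra h
    have hlt : e t < 1 := lt_of_le_of_ne hm1 h
    have hg : (e t)⁻¹ • e ∈ EffectSet S := by
      intro x hx
      simp only [LinearMap.smul_apply, smul_eq_mul]
      constructor
      · exact mul_nonneg (by positivity) (he.1 x hx).1
      · have h2 := mul_le_mul_of_nonneg_left (hmax' x hx) (inv_nonneg.2 hm0.le)
        rwa [inv_mul_cancel₀ hm0.ne'] at h2
    have h0 : (0 : V →ₗ[ℝ] ℝ) ∈ EffectSet S := by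
      intro x hx; simp
    have hseg : e ∈ openSegment ℝ ((e t)⁻¹ • e) 0 := by
      refine ⟨e t, 1 - e t, hm0, by linarith, by ring, ?_⟩
      rw [smul_smul, mul_inv_cancel₀ hm0.ne', one_smul, smul_zero, add_zero]
    exact he0 ((he.2 h0 hg (by rwa [openSegment_symm] at hseg)).symm)
  have hμeq : e s = 0 := by
    rcases (he.1 s hsS).1.eq_or_lt with h | hpos
    · exact h.symm
    exfalso
    have hμ1 : e s < 1 := by
      rcases lt_or_ge (e s) 1 with h | h
      · exact h
      · exact absurd (hzero (e - u) (fun x hx => by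
          simp only [LinearMap.sub_apply, hu x hx]
          have := (he.1 x hx).2
          have := hmin' x hx
          linarith)) (fun hh => heu (by rwa [sub_eq_zero] at hh))
    have hg : (1 - e s)⁻¹ • (e - (e s) • u) ∈ EffectSet S := by
      intro x hx
      simp only [LinearMap.smul_apply, LinearMap.sub_apply, smul_eq_mul, hu x hx, mul_one]
      have h1 : (0:ℝ) < 1 - e s := by linarith
      constructor
      · apply mul_nonneg (by positivity)
        have := hmin' x hx; linarith
      · have hb : e x - e s ≤ 1 - e s := by have := (he.1 x hx).2; linarith
        have h2 := mul_le_mul_of_nonneg_left hb (inv_nonneg.2 h1.le)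
        rwa [inv_mul_cancel₀ h1.ne'] at h2
    have hU : u ∈ EffectSet S := fun x hx => by rw [hu x hx]; norm_num
    have hseg : e ∈ openSegment ℝ u ((1 - e s)⁻¹ • (e - (e s) • u)) := by
      refine ⟨e s, 1 - e s, hpos, by linarith, by ring, ?_⟩
      rw [smul_smul, mul_inv_cancel₀ (by linarith : (1:ℝ) - e s ≠ 0), one_smul]
      abel
    exact heu (he.2 hU hg hseg).symm
  have hσt : e ((2:ℝ) • s₀ - t) = 2 * e s₀ - e t := by
    simp [map_sub, map_smul, smul_eq_mul]
  have hσs : e ((2:ℝ) • s₀ - s) = 2 * e s₀ - e s := by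
    simp [map_sub, map_smul, smul_eq_mul]
  have h1 := (he.1 _ (hsym t htS)).1
  have h2 := (he.1 _ (hsym s hsS)).2
  rw [hσt, hmeq] at h1
  rw [hσs, hμeq] at h2
  exact ⟨t, htS, s, hsS, hmeq, hμeq, by linarith⟩

/-- The complement of an extreme effect is extreme. -/
lemma nfi_compl_extreme (hu : ∀ s ∈ S, u s = 1)
    {e : V →ₗ[ℝ] ℝ} (he : e ∈ Set.extremePoints ℝ (EffectSet S)) :
    u - e ∈ Set.extremePoints ℝ (EffectSet S) := by
  constructor
  · intro s hs
    simp only [LinearMap.sub_apply, hu s hs]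
    have := he.1 s hs
    constructor <;> linarith [this.1, this.2]
  · intro x₁ hx₁ x₂ hx₂ hseg
    obtain ⟨a, b, ha, hb, hab, heq⟩ := hseg
    have h1 : u - x₁ ∈ EffectSet S := by
      intro s hs
      simp only [LinearMap.sub_apply, hu s hs]
      have := hx₁ s hs
      constructor <;> linarith [this.1, this.2]
    have h2 : u - x₂ ∈ EffectSet S := by
      intro s hs
      simp only [LinearMap.sub_apply, hu s hs]
      have := hx₂ s hs
      constructor <;> linarith [this.1, this.2]
    have hseg' : e ∈ openSegment ℝ (u - x₁) (u - x₂) := by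
      refine ⟨a, b, ha, hb, hab, ?_⟩
      have h3 : a • x₁ + b • x₂ = u - e := heq
      rw [smul_sub, smul_sub]
      have hu' : a • u + b • u = u := by rw [← add_smul, hab, one_smul]
      calc a • u - a • x₁ + (b • u - b • x₂)
          = (a • u + b • u) - (a • x₁ + b • x₂) := by abel
        _ = u - (u - e) := by rw [hu', h3]
        _ = e := by abel
    have hh1 := he.2 h1 h2 hseg'
    have h4 : x₁ = u - (u - x₁) := by abel
    rw [h4, hh1]

/-- Indecomposability: any sub-effect of a nontrivial extreme effect is proportional to it. -/
lemma nfi_indecomp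
    (s₀ : V) (hs₀ : s₀ ∈ S) (hsym : ∀ s ∈ S, (2 : ℝ) • s₀ - s ∈ S)
    (hzero : ∀ w : V →ₗ[ℝ] ℝ, (∀ s ∈ S, w s = 0) → w = 0)
    {e : V →ₗ[ℝ] ℝ} (he : e ∈ Set.extremePoints ℝ (EffectSet S))
    (hhalf : e s₀ = 1/2)
    (g : V →ₗ[ℝ] ℝ) (hg : ∀ s ∈ S, 0 ≤ g s ∧ g s ≤ e s) :
    g = (2 * g s₀) • e := by
  have hgσ : ∀ s ∈ S, g ((2:ℝ) • s₀ - s) = 2 * g s₀ - g s := by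
    intro s hs; simp [map_sub, map_smul, smul_eq_mul]
  have hgle : ∀ s ∈ S, g s ≤ 2 * g s₀ := by
    intro s hs
    have h1 := (hg _ (hsym s hs)).1
    rw [hgσ s hs] at h1
    linarith
  set lam := 2 * g s₀ with hlam
  have hlam0 : 0 ≤ lam := by have := (hg s₀ hs₀).1; positivity
  have hlam1 : lam ≤ 1 := by have := (hg s₀ hs₀).2; rw [hhalf] at this; linarith
  rcases hlam0.eq_or_lt with h0 | h0
  · have hg0 : g = 0 := by
      apply hzero
      intro s hs
      have := hgle s hs
      have := (hg s hs).1
      linarith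
    rw [hg0, ← h0, zero_smul]
  rcases hlam1.lt_or_eq with h1 | h1
  · have hx₁ : lam⁻¹ • g ∈ EffectSet S := by
      intro s hs
      simp only [LinearMap.smul_apply, smul_eq_mul]
      constructor
      · exact mul_nonneg (by positivity) (hg s hs).1
      · have h2 := mul_le_mul_of_nonneg_left (hgle s hs) (inv_nonneg.2 h0.le)
        rwa [inv_mul_cancel₀ h0.ne'] at h2
    have hhle : ∀ s ∈ S, e s - g s ≤ 1 - lam := by
      intro s hs
      have h2 := (hg _ (hsym s hs)).2
      rw [hgσ s hs] at h2
      have h3 : e ((2:ℝ) • s₀ - s) = 2 * e s₀ - e s := by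
        simp [map_sub, map_smul, smul_eq_mul]
      rw [h3, hhalf] at h2
      rw [hlam]; linarith
    have hx₂ : (1 - lam)⁻¹ • (e - g) ∈ EffectSet S := by
      intro s hs
      simp only [LinearMap.smul_apply, LinearMap.sub_apply, smul_eq_mul]
      have hpos : (0:ℝ) < 1 - lam := by linarith
      constructor
      · apply mul_nonneg (by positivity)
        have := (hg s hs).2; linarith
      · have h2 := mul_le_mul_of_nonneg_left (hhle s hs) (inv_nonneg.2 hpos.le)
        rwa [inv_mul_cancel₀ hpos.ne'] at h2
    have hseg : e ∈ openSegment ℝ (lam⁻¹ • g) ((1 - lam)⁻¹ • (e - g)) := by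
      refine ⟨lam, 1 - lam, h0, by linarith, by ring, ?_⟩
      rw [smul_smul, mul_inv_cancel₀ h0.ne', one_smul,
        smul_smul, mul_inv_cancel₀ (by linarith : (1:ℝ) - lam ≠ 0), one_smul]
      abel
    have hx1e := he.2 hx₁ hx₂ hseg
    calc g = lam • (lam⁻¹ • g) := by
            rw [smul_smul, mul_inv_cancel₀ h0.ne', one_smul]
      _ = lam • e := by rw [hx1e]
  · have hge : g = e := by
      have hh : e - g = 0 := by
        apply hzero
        intro s hs
        have h2 := (hg _ (hsym s hs)).2
        rw [hgσ s hs] at h2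
        have h3 : e ((2:ℝ) • s₀ - s) = 2 * e s₀ - e s := by
          simp [map_sub, map_smul, smul_eq_mul]
        rw [h3, hhalf] at h2
        have h4 := (hg s hs).2
        simp only [LinearMap.sub_apply]
        rw [hlam] at h1
        linarith
      have h5 : g = e - (e - g) := by abel
      rw [h5, hh, sub_zero]
    rw [hge, h1, one_smul]

set_option maxHeartbeats 1000000 in
/-- Key lemma: if `A` is compatible with everything then `A` is a post-processing of
the dichotomic observable `(e, u-e)` for any nontrivial extreme effect `e`. -/
lemma nfi_key
    (hSne : S.Nonempty) (hScpt : IsCompact S)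
    (hu : ∀ s ∈ S, u s = 1)
    (s₀ : V) (hs₀ : s₀ ∈ S) (hsym : ∀ s ∈ S, (2 : ℝ) • s₀ - s ∈ S)
    (hzero : ∀ w : V →ₗ[ℝ] ℝ, (∀ s ∈ S, w s = 0) → w = 0)
    {e : V →ₗ[ℝ] ℝ} (he : e ∈ Set.extremePoints ℝ (EffectSet S))
    (he0 : e ≠ 0) (heu : e ≠ u)
    (A : GObs S u) (hA : A.InT3) :
    ∃ α β : Fin A.n → ℝ, (∀ y, 0 ≤ α y) ∧ (∀ y, 0 ≤ β y) ∧
      (∑ y, α y = 1) ∧ (∑ y, β y = 1) ∧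
      ∀ y, A.eff y = α y • e + β y • (u - e) := by
  obtain ⟨t1, ht1S, t0, ht0S, het1, het0, hhalf⟩ :=
    nfi_ext_struct hSne hScpt hu s₀ hs₀ hsym hzero e he he0 heu
  have heff0 : IsEffect S e := he.1
  have hue_ext := nfi_compl_extreme hu he
  have heff1 : IsEffect S (u - e) := hue_ext.1
  have heffs : ∀ i : Fin 2, IsEffect S (![e, u - e] i) := by
    intro i; fin_cases i
    · exact heff0
    · exact heff1
  have hsumE : ∑ i : Fin 2, ![e, u - e] i = u := by
    rw [Fin.sum_univ_two]
    show e + (u - e) = u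
    abel
  obtain ⟨G, hGA, hGE⟩ := hA ⟨2, ![e, u - e], heffs, hsumE⟩
  obtain ⟨ν, hνn, hνs, hνe⟩ := hGE
  have he_eq : e = ∑ x, ν x 0 • G.eff x := hνe 0
  have hue_eq : u - e = ∑ x, ν x 1 • G.eff x := hνe 1
  have key : ∀ (w : V →ₗ[ℝ] ℝ), w ∈ Set.extremePoints ℝ (EffectSet S) → w s₀ = 1/2 →
      ∀ (c : Fin G.n → ℝ), (∀ x, 0 ≤ c x) → w = ∑ x, c x • G.eff x →
      ∀ x, 0 < c x → G.eff x = (2 * G.eff x s₀) • w := by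
    intro w hw hwhalf c hc hsum x hx
    have hsub : ∀ s ∈ S, 0 ≤ (c x • G.eff x) s ∧ (c x • G.eff x) s ≤ w s := by
      intro s hs
      have hterm : ∀ x', 0 ≤ c x' * G.eff x' s := fun x' =>
        mul_nonneg (hc x') ((G.effect x' s hs).1)
      have hws : w s = ∑ x', c x' * G.eff x' s := by
        rw [hsum, LinearMap.sum_apply]
        simp [smul_eq_mul]
      constructor
      · simpa using hterm x
      · rw [hws]
        simpa using Finset.single_le_sum (f := fun x' => c x' * G.eff x' s)
          (fun i _ => hterm i) (Finset.mem_univ x)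
    have hind := nfi_indecomp s₀ hs₀ hsym hzero hw hwhalf (c x • G.eff x) hsub
    have h2 : c x • G.eff x = c x • ((2 * G.eff x s₀) • w) := by
      rw [hind, smul_smul]
      congr 1
      simp only [LinearMap.smul_apply, smul_eq_mul]
      ring
    exact smul_right_injective _ hx.ne' h2
  have hwhalf1 : (u - e) s₀ = 1/2 := by
    simp only [LinearMap.sub_apply, hu s₀ hs₀, hhalf]
    norm_num
  have hce : ∀ x, 0 < ν x 0 → G.eff x = (2 * G.eff x s₀) • e :=
    key e he hhalf (fun x => ν x 0) (fun x => hνn x 0) he_eq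
  have hcf : ∀ x, 0 < ν x 1 → G.eff x = (2 * G.eff x s₀) • (u - e) :=
    key (u - e) hue_ext hwhalf1 (fun x => ν x 1) (fun x => hνn x 1) hue_eq
  have hν2 : ∀ x, ν x 0 + ν x 1 = 1 := by
    intro x; have := hνs x; rwa [Fin.sum_univ_two] at this
  set μ0 : Fin G.n → ℝ := fun x => if 0 < ν x 0 then 2 * G.eff x s₀ else 0 with hμ0
  set μ1 : Fin G.n → ℝ := fun x => if 0 < ν x 1 then 2 * G.eff x s₀ else 0 with hμ1
  have hgx : ∀ x, G.eff x = μ0 x • e + μ1 x • (u - e) := by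
    intro x
    by_cases h0 : 0 < ν x 0 <;> by_cases h1 : 0 < ν x 1
    · have ha := hce x h0
      have hb := hcf x h1
      have hcoef : 2 * G.eff x s₀ = 0 := by
        have heval := congrArg (fun φ : V →ₗ[ℝ] ℝ => φ t1) (ha.symm.trans hb)
        simp only [LinearMap.smul_apply, LinearMap.sub_apply, smul_eq_mul] at heval
        rw [het1, hu t1 ht1S] at heval
        nlinarith [heval]
      simp only [hμ0, hμ1, if_pos h0, if_pos h1, hcoef, zero_smul, add_zero]
      rw [ha, hcoef, zero_smul]
    · simp only [hμ0, hμ1, if_pos h0, if_neg h1, zero_smul, add_zero]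
      exact hce x h0
    · simp only [hμ0, hμ1, if_neg h0, if_pos h1, zero_smul, zero_add]
      exact hcf x h1
    · exfalso
      have hs := hν2 x
      have ha := hνn x 0
      have hb := hνn x 1
      push_neg at h0 h1
      linarith
  have hsum0 : ∑ x, μ0 x = 1 := by
    have h := congrArg (fun φ : V →ₗ[ℝ] ℝ => φ t1) G.sum_eq
    simp only [LinearMap.sum_apply] at h
    rw [hu t1 ht1S] at h
    calc ∑ x, μ0 x = ∑ x, G.eff x t1 := by
          refine Finset.sum_congr rfl fun x _ => ?_
          rw [hgx x]
          simp only [LinearMap.add_apply, LinearMap.smul_apply, LinearMap.sub_apply,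
            smul_eq_mul, het1, hu t1 ht1S]
          ring
      _ = 1 := h
  have hsum1 : ∑ x, μ1 x = 1 := by
    have h := congrArg (fun φ : V →ₗ[ℝ] ℝ => φ t0) G.sum_eq
    simp only [LinearMap.sum_apply] at h
    rw [hu t0 ht0S] at h
    calc ∑ x, μ1 x = ∑ x, G.eff x t0 := by
          refine Finset.sum_congr rfl fun x _ => ?_
          rw [hgx x]
          simp only [LinearMap.add_apply, LinearMap.smul_apply, LinearMap.sub_apply,
            smul_eq_mul, het0, hu t0 ht0S]
          ring
      _ = 1 := h
  have hμ0n : ∀ x, 0 ≤ μ0 x := by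
    intro x
    simp only [hμ0]
    split_ifs
    · have := (G.effect x s₀ hs₀).1; linarith
    · exact le_rfl
  have hμ1n : ∀ x, 0 ≤ μ1 x := by
    intro x
    simp only [hμ1]
    split_ifs
    · have := (G.effect x s₀ hs₀).1; linarith
    · exact le_rfl
  have hEG : GObs.PostProc ⟨2, ![e, u - e], heffs, hsumE⟩ G := by
    refine ⟨![μ0, μ1], ?_, ?_, ?_⟩
    · intro i x
      fin_cases i
      · exact hμ0n x
      · exact hμ1n x
    · intro i
      fin_cases i
      · exact hsum0
      · exact hsum1
    · intro x
      rw [Fin.sum_univ_two]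
      exact hgx x
  have hEA : GObs.PostProc ⟨2, ![e, u - e], heffs, hsumE⟩ A :=
    nfi_postProc_trans hEG hGA
  obtain ⟨κ, hκn, hκs, hκe⟩ := hEA
  refine ⟨fun y => κ 0 y, fun y => κ 1 y, fun y => hκn 0 y, fun y => hκn 1 y,
    hκs 0, hκs 1, ?_⟩
  intro y
  have h := hκe y
  rwa [Fin.sum_univ_two] at h

end Aux2

/-- Corollary 3: in every non-classical point-symmetric state space,
`T₁ = T₂ = T₃`: the no-free-information principle holds, i.e. every observable
compatible with all observables is trivial.  Non-classicality is expressed by the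
existence of two non-trivial extreme effects `e`, `f` with `e ≠ f` and `e ≠ u − f`. -/
theorem pointSymmetric_noFreeInformation
    {V : Type*} [NormedAddCommGroup V] [NormedSpace ℝ V] [FiniteDimensional ℝ V]
    (S : Set V) (hSne : S.Nonempty) (hScvx : Convex ℝ S) (hScpt : IsCompact S)
    (u : V →ₗ[ℝ] ℝ) (hu : ∀ s ∈ S, u s = 1)
    (s₀ : V) (hs₀ : s₀ ∈ S) (hsym : ∀ s ∈ S, (2 : ℝ) • s₀ - s ∈ S)
    (hnc : ∃ e f : V →ₗ[ℝ] ℝ,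
      e ∈ Set.extremePoints ℝ (EffectSet S) ∧ f ∈ Set.extremePoints ℝ (EffectSet S) ∧
      e ≠ 0 ∧ e ≠ u ∧ f ≠ 0 ∧ f ≠ u ∧ e ≠ f ∧ e ≠ u - f) :
    ∀ A : GObs S u, A.InT3 → A.Trivial := by
  intro A hA
  obtain ⟨e, f, he, hf, he0, heu, hf0, hfu, hef, hefu⟩ := hnc
  have hzero : ∀ w : V →ₗ[ℝ] ℝ, (∀ s ∈ S, w s = 0) → w = 0 :=
    nfi_zero_of_vanish ⟨e, he⟩
  obtain ⟨te1, hte1, te0, hte0, het1, het0, hehalf⟩ :=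
    nfi_ext_struct hSne hScpt hu s₀ hs₀ hsym hzero e he he0 heu
  obtain ⟨tf1, htf1, tf0, htf0, hft1, hft0, hfhalf⟩ :=
    nfi_ext_struct hSne hScpt hu s₀ hs₀ hsym hzero f hf hf0 hfu
  obtain ⟨α, β, hα, hβ, hαs, hβs, hαβ⟩ :=
    nfi_key hSne hScpt hu s₀ hs₀ hsym hzero he he0 heu A hA
  obtain ⟨γ, δ, hγ, hδ, hγs, hδs, hγδ⟩ :=
    nfi_key hSne hScpt hu s₀ hs₀ hsym hzero hf hf0 hfu A hA
  have hkey : ∀ y, α y = β y := by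
    intro y
    by_contra hne
    have hmap : (α y - β y) • e = (γ y - δ y) • f + (δ y - β y) • u := by
      have h := (hαβ y).symm.trans (hγδ y)
      linear_combination (norm := module) h
    have hd : α y - β y ≠ 0 := sub_ne_zero.2 hne
    set L := (α y - β y)⁻¹ * (γ y - δ y) with hLdef
    set K := (α y - β y)⁻¹ * (δ y - β y) with hKdef
    have hmape : e = L • f + K • u := by
      have h := congrArg (fun w : V →ₗ[ℝ] ℝ => (α y - β y)⁻¹ • w) hmap
      simp only [smul_add, smul_smul] at h
      rwa [inv_mul_cancel₀ hd, one_smul] at h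
    have hev : ∀ s : V, e s = L * f s + K * u s := fun s => by
      rw [hmape]; simp [smul_eq_mul]
    have h₀ := hev s₀
    rw [hehalf, hfhalf, hu s₀ hs₀] at h₀
    have hf1 := hev tf1; rw [hft1, hu tf1 htf1] at hf1
    have hf0' := hev tf0; rw [hft0, hu tf0 htf0] at hf0'
    have he1 := hev te1; rw [het1, hu te1 hte1] at he1
    have he0' := hev te0; rw [het0, hu te0 hte0] at he0'
    have hfbe1 := hf.1 te1 hte1
    have hfbe0 := hf.1 te0 hte0
    have hbe1 := he.1 tf1 htf1
    rw [hf1] at hbe1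
    have hK : K = (1 - L)/2 := by linarith
    rcases le_or_gt 0 L with hL | hL
    · have hmul : L * f te1 ≤ L := by
        calc L * f te1 ≤ L * 1 := mul_le_mul_of_nonneg_left hfbe1.2 hL
          _ = L := mul_one L
      have hL1 : L = 1 := by linarith [hbe1.2]
      have hK0 : K = 0 := by rw [hK, hL1]; norm_num
      apply hef
      rw [hmape, hL1, hK0, one_smul, zero_smul, add_zero]
    · have hmul : L ≤ L * f te0 := by
        calc L = L * 1 := (mul_one L).symm
          _ ≤ L * f te0 := mul_le_mul_of_nonpos_left hfbe0.2 hL.le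
      have hL1 : L = -1 := by linarith [hbe1.1]
      have hK1 : K = 1 := by rw [hK, hL1]; norm_num
      apply hefu
      rw [hmape, hL1, hK1, one_smul]
      module
  refine ⟨fun y => α y, hα, hαs, ?_⟩
  intro y
  have h1 : A.eff y = α y • e + α y • (u - e) := by
    rw [hαβ y, ← hkey y]
  rw [h1, ← smul_add]
  congr 1
  abel
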